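/- Let S be a finite right restriction EI-Ehresmann semigroup that is regular (every element a ∈ S satisfies aba = a for some b ∈ S). Then there exists an injective map Φ from S into the monoid of partial functions on the underlying set of S such that for all a, b ∈ S: Φ(ab) = Φ(a) ∘ Φ(b), Φ(a*) is the partial identity on the domain of Φ(a), and Φ(a⁺) is the partial identity on the range of Φ(a). -/

import Mathlib

def LtRel {S : Type*} [Semigroup S] (E : Set S) (a b : S) : Prop :=
  ∀ e ∈ E, (a * e = a ↔ b * e = b)

def RtRel {S : Type*} [Semigroup S] (E : Set S) (a b : S) : Prop :=
  ∀ e ∈ E, (e * a = a ↔ e * b = b)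

def HtRel {S : Type*} [Semigroup S] (E : Set S) (a b : S) : Prop :=
  LtRel E a b ∧ RtRel E a b

/-- An `E`-Ehresmann structure on a semigroup `S`: `E` is a subsemilattice
(commutative set of idempotents closed under multiplication), every `Lt`-class
and every `Rt`-class contains exactly one element of `E` (denoted `star a` and
`plus a` respectively), `Lt` is a right congruence and `Rt` is a left congruence
(expressed by the identities `(ab)* = (a*b)*` and `(ab)⁺ = (ab⁺)⁺`). -/
structure Ehresmann (S : Type*) [Semigroup S] (E : Set S) where
  star : S → S
  plus : S → S
  idem : ∀ e ∈ E, e * e = e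
  comm : ∀ e ∈ E, ∀ f ∈ E, e * f = f * e
  mul_mem : ∀ e ∈ E, ∀ f ∈ E, e * f ∈ E
  star_mem : ∀ a : S, star a ∈ E
  star_lt : ∀ a : S, LtRel E a (star a)
  star_unique : ∀ a : S, ∀ f ∈ E, LtRel E a f → f = star a
  plus_mem : ∀ a : S, plus a ∈ E
  plus_rt : ∀ a : S, RtRel E a (plus a)
  plus_unique : ∀ a : S, ∀ f ∈ E, RtRel E a f → f = plus a
  star_congr : ∀ a b : S, star (a * b) = star (star a * b)
  plus_congr : ∀ a b : S, plus (a * b) = plus (a * plus b)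

def RightRestriction {S : Type*} [Semigroup S] {E : Set S} (M : Ehresmann S E) : Prop :=
  ∀ e ∈ E, ∀ a : S, e * a = a * M.star (e * a)

def LeftRestriction {S : Type*} [Semigroup S] {E : Set S} (M : Ehresmann S E) : Prop :=
  ∀ e ∈ E, ∀ a : S, a * e = M.plus (a * e) * a

/-- A subset `G` of a semigroup is a group under the semigroup multiplication. -/
def IsGroupSubset {S : Type*} [Semigroup S] (G : Set S) : Prop :=
  (∀ a ∈ G, ∀ b ∈ G, a * b ∈ G) ∧
  ∃ u ∈ G, (∀ a ∈ G, u * a = a ∧ a * u = a) ∧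
    (∀ a ∈ G, ∃ b ∈ G, a * b = u ∧ b * a = u)

/-- `S` is EI-Ehresmann (w.r.t. `E`) when every `Ht`-class of a projection is a group. -/
def EIEhresmann {S : Type*} [Semigroup S] (E : Set S) : Prop :=
  ∀ e ∈ E, IsGroupSubset {a : S | HtRel E a e}

def SandwichSet {S : Type*} [Semigroup S] (f₁ f₂ : S) : Set S :=
  {h : S | h * h = h ∧ f₂ * h * f₁ = h ∧ f₁ * h * f₂ = f₁ * f₂}

def GreenR {S : Type*} [Semigroup S] (a b : S) : Prop :=
  insert a {x : S | ∃ s, a * s = x} = insert b {x : S | ∃ s, b * s = x}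

def GreenL {S : Type*} [Semigroup S] (a b : S) : Prop :=
  insert a {x : S | ∃ s, s * a = x} = insert b {x : S | ∃ s, s * b = x}

def GreenJ {S : Type*} [Semigroup S] (a b : S) : Prop :=
  insert a ({x : S | ∃ s, a * s = x} ∪ {x : S | ∃ s, s * a = x} ∪
      {x : S | ∃ s t, s * a * t = x}) =
  insert b ({x : S | ∃ s, b * s = x} ∪ {x : S | ∃ s, s * b = x} ∪
      {x : S | ∃ s t, s * b * t = x})

section StmtAux

variable {S : Type*} [Semigroup S] {E : Set S} (M : Ehresmann S E)

lemma star_of_mem {e : S} (he : e ∈ E) : M.star e = e :=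
  (M.star_unique e e he (fun _ _ => Iff.rfl)).symm

lemma plus_of_mem {e : S} (he : e ∈ E) : M.plus e = e :=
  (M.plus_unique e e he (fun _ _ => Iff.rfl)).symm

lemma mul_star (a : S) : a * M.star a = a :=
  (M.star_lt a (M.star a) (M.star_mem a)).mpr (M.idem _ (M.star_mem a))

lemma plus_mul (a : S) : M.plus a * a = a :=
  (M.plus_rt a (M.plus a) (M.plus_mem a)).mpr (M.idem _ (M.plus_mem a))

lemma star_mul_self (hRR : RightRestriction M) {k : S} (hk : k * k = k) :
    M.star k * k = k := by
  have h1 : M.star (M.star k * k) = M.star k := by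
    rw [← M.star_congr k k, hk]
  have h2 := hRR (M.star k) (M.star_mem k) k
  rw [h1, mul_star] at h2
  exact h2

end StmtAux

private def pow1 {S : Type*} [Semigroup S] (h : S) : ℕ → S
  | 0 => h
  | n + 1 => pow1 h n * h

private lemma pow1_shift {S : Type*} [Semigroup S] (h : S) {i d : ℕ}
    (hid : pow1 h (i + d) = pow1 h i) : ∀ t, pow1 h (i + d + t) = pow1 h (i + t) := by
  intro t
  induction t with
  | zero => exact hid
  | succ t ih =>
    show pow1 h (i + d + t) * h = pow1 h (i + t) * h
    rw [ih]

private lemma pow1_add {S : Type*} [Semigroup S] (h : S) (m : ℕ) :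
    ∀ n, pow1 h (m + n + 1) = pow1 h m * pow1 h n := by
  intro n
  induction n with
  | zero => rfl
  | succ n ih =>
    show pow1 h (m + n + 1) * h = pow1 h m * (pow1 h n * h)
    rw [ih, mul_assoc]

private lemma exists_idem_aux {S : Type*} [Semigroup S] (h : S) (i d : ℕ) (hd : 1 ≤ d)
    (hid : pow1 h (i + d) = pow1 h i) :
    ∃ n, pow1 h n * pow1 h n = pow1 h n := by
  have hper : ∀ c t, pow1 h (i + c * d + t) = pow1 h (i + t) := by
    intro c
    induction c with
    | zero => intro t; simp
    | succ c ih =>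
      intro t
      have harith : i + (c + 1) * d + t = i + d + (c * d + t) := by ring
      rw [harith, pow1_shift h hid (c * d + t), ← Nat.add_assoc, ih t]
  obtain ⟨m, hm1, hperm⟩ : ∃ m, i + 1 ≤ m ∧ ∀ t, pow1 h (i + m + t) = pow1 h (i + t) :=
    ⟨(i + 1) * d, le_mul_of_one_le_right (Nat.zero_le _) hd, hper (i + 1)⟩
  refine ⟨m - 1, ?_⟩
  rw [← pow1_add h (m - 1) (m - 1)]
  have e : (m - 1) + (m - 1) + 1 = i + m + (m - 1 - i) := by omega
  rw [e, hperm (m - 1 - i)]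
  congr 1
  omega

private lemma exists_idem_pow1 {S : Type*} [Semigroup S] [Finite S] (h : S) :
    ∃ n : ℕ, pow1 h n * pow1 h n = pow1 h n := by
  obtain ⟨i0, j0, hne, heq⟩ := Finite.exists_ne_map_eq_of_infinite (pow1 h)
  rcases Nat.lt_or_ge i0 j0 with hlt | hge
  · exact exists_idem_aux h i0 (j0 - i0) (by omega)
      (by rw [show i0 + (j0 - i0) = j0 by omega]; exact heq.symm)
  · have hlt : j0 < i0 := by omega
    exact exists_idem_aux h j0 (i0 - j0) (by omega)
      (by rw [show j0 + (i0 - j0) = i0 by omega]; exact heq)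

private lemma plus_in_right_ideal {S : Type*} [Semigroup S] [Finite S] {E : Set S}
    (M : Ehresmann S E) (hRR : RightRestriction M) (hEI : EIEhresmann E)
    (hreg : ∀ a : S, ∃ b : S, a * b * a = a) (a : S) :
    ∃ t : S, a * t = M.plus a := by
  obtain ⟨b, hb⟩ := hreg a
  set p := M.plus a with hp
  have hpE : p ∈ E := M.plus_mem a
  have hpa : p * a = a := plus_mul M a
  have hpp : p * p = p := M.idem p hpE
  set h := a * b * p with hh
  have hhp : h * p = h := by rw [hh, mul_assoc, hpp]
  have hK1 : M.plus h = p := by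
    have h1 : h * a = a := by
      rw [hh, mul_assoc, hpa, hb]
    have hr : RtRel E h p := by
      intro e he
      constructor
      · intro heh
        have hea : e * a = a := by
          rw [← h1, ← mul_assoc, heh]
        exact (M.plus_rt a e he).mp hea
      · intro hep
        have hea : e * a = a := (M.plus_rt a e he).mpr hep
        rw [hh]
        calc e * (a * b * p) = e * a * b * p := by rw [← mul_assoc, ← mul_assoc]
          _ = a * b * p := by rw [hea]
    exact (M.plus_unique h p hpE hr).symm
  have hpow_p : ∀ n, pow1 h n * p = pow1 h n := by
    intro n
    induction n with
    | zero => exact hhp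
    | succ n ih =>
      show pow1 h n * h * p = pow1 h n * h
      rw [mul_assoc, hhp]
  have hpow_plus : ∀ n, M.plus (pow1 h n) = p := by
    intro n
    induction n with
    | zero => exact hK1
    | succ n ih =>
      show M.plus (pow1 h n * h) = p
      rw [M.plus_congr, hK1, hpow_p, ih]
  have hpow_aS : ∀ n, ∃ r, pow1 h n = a * r := by
    intro n
    induction n with
    | zero => exact ⟨b * p, by show h = a * (b * p); rw [hh, mul_assoc]⟩
    | succ n ih =>
      obtain ⟨r, hr⟩ := ih
      exact ⟨r * h, by show pow1 h n * h = a * (r * h); rw [hr, mul_assoc]⟩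
  obtain ⟨n, hkidem⟩ := exists_idem_pow1 h
  set k := pow1 h n with hk
  have hkp : M.plus k = p := hpow_plus n
  have hpk : p * k = k := by rw [← hkp]; exact plus_mul M k
  have hsk : M.star k * k = k := star_mul_self M hRR hkidem
  have hsp : M.star k * p = p := by
    have h4 := (M.plus_rt k (M.star k) (M.star_mem k)).mp hsk
    rwa [hkp] at h4
  set u := k * p with hu
  have hsu : M.star u = p := by
    rw [hu, M.star_congr, hsp, star_of_mem M hpE]
  have huk : u * k = k := by rw [hu, mul_assoc, hpk, hkidem]
  have hpu : M.plus u = p := by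
    have hr : RtRel E u p := by
      intro e he
      constructor
      · intro heu
        have hek : e * k = k := by
          rw [← huk, ← mul_assoc, heu]
        have h5 := (M.plus_rt k e he).mp hek
        rwa [hkp] at h5
      · intro hep
        have hek : e * k = k := (M.plus_rt k e he).mpr (by rw [hkp]; exact hep)
        rw [hu, ← mul_assoc, hek]
    exact (M.plus_unique u p hpE hr).symm
  obtain ⟨-, w, hwG, hwid, hwinv⟩ := hEI p hpE
  have hpG : p ∈ {x : S | HtRel E x p} := ⟨fun _ _ => Iff.rfl, fun _ _ => Iff.rfl⟩
  have huG : u ∈ {x : S | HtRel E x p} := by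
    have h6 := M.star_lt u; rw [hsu] at h6
    have h7 := M.plus_rt u; rw [hpu] at h7
    exact ⟨h6, h7⟩
  have hwHt : HtRel E w p := hwG
  have hw_star : M.star w = p := (M.star_unique w p hpE hwHt.1).symm
  have hwp : w * p = w := by rw [← hw_star]; exact mul_star M w
  have hw_eq : w = p := hwp.symm.trans (hwid p hpG).1
  obtain ⟨u', hu'G, huu', hu'u⟩ := hwinv u huG
  obtain ⟨r, hr⟩ := hpow_aS n
  refine ⟨r * (p * u'), ?_⟩
  calc a * (r * (p * u')) = a * r * (p * u') := (mul_assoc _ _ _).symm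
    _ = k * (p * u') := by rw [← hr]
    _ = k * p * u' := (mul_assoc _ _ _).symm
    _ = u * u' := by rw [← hu]
    _ = p := by rw [huu', hw_eq]

private def Phi {S : Type*} [Semigroup S] {E : Set S} (M : Ehresmann S E) (a : S) : S →. S :=
  fun x => Part.assert (M.star a * x = x) (fun _ => Part.some (a * x))

private lemma mem_Phi {S : Type*} [Semigroup S] {E : Set S} (M : Ehresmann S E) {a x y : S} :
    y ∈ Phi M a x ↔ (M.star a * x = x ∧ a * x = y) := by
  simp only [Phi, Part.mem_assert_iff, Part.mem_some_iff]
  constructor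
  · rintro ⟨h1, h2⟩
    exact ⟨h1, h2.symm⟩
  · rintro ⟨h1, h2⟩
    exact ⟨h1, h2.symm⟩

private lemma dom_Phi {S : Type*} [Semigroup S] {E : Set S} (M : Ehresmann S E) {a x : S} :
    x ∈ (Phi M a).Dom ↔ M.star a * x = x := by
  rw [PFun.mem_dom]
  constructor
  · rintro ⟨y, hy⟩
    exact ((mem_Phi M).mp hy).1
  · intro hd
    exact ⟨a * x, (mem_Phi M).mpr ⟨hd, rfl⟩⟩

private lemma mem_ran_iff' {α β : Type*} (f : α →. β) (y : β) : y ∈ f.ran ↔ ∃ x, y ∈ f x :=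
  Iff.rfl

/-- A finite regular right restriction EI-Ehresmann semigroup embeds, as a
bi-unary semigroup, into the monoid of partial functions on its underlying set:
`Φ(ab) = Φ(a) ∘ Φ(b)`, `Φ(a*)` is the partial identity on the domain of `Φ(a)`, and
`Φ(a⁺)` is the partial identity on the range of `Φ(a)`. -/
theorem stmt6 {S : Type*} [Semigroup S] [Finite S] (E : Set S) (M : Ehresmann S E)
    (hRR : RightRestriction M) (hEI : EIEhresmann E)
    (hreg : ∀ a : S, ∃ b : S, a * b * a = a) :
    ∃ Φ : S → (S →. S), Function.Injective Φ ∧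
      (∀ a b : S, Φ (a * b) = (Φ a).comp (Φ b)) ∧
      (∀ a : S, Φ (M.star a) = PFun.res id (Φ a).Dom) ∧
      (∀ a : S, Φ (M.plus a) = PFun.res id (Φ a).ran) := by
  have key : ∀ a : S, ∃ t, a * t = M.plus a := fun a =>
    plus_in_right_ideal M hRR hEI hreg a
  refine ⟨Phi M, ?_, ?_, ?_, ?_⟩
  · -- injectivity
    intro a b hab
    have h1 : a ∈ Phi M a (M.star a) :=
      (mem_Phi M).mpr ⟨M.idem _ (M.star_mem a), mul_star M a⟩
    rw [hab] at h1
    obtain ⟨hba1, hba2⟩ := (mem_Phi M).mp h1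
    have h2 : b ∈ Phi M b (M.star b) :=
      (mem_Phi M).mpr ⟨M.idem _ (M.star_mem b), mul_star M b⟩
    rw [← hab] at h2
    obtain ⟨hab1, hab2⟩ := (mem_Phi M).mp h2
    have hc := M.comm _ (M.star_mem a) _ (M.star_mem b)
    rw [hab1, hba1] at hc
    -- hc : M.star b = M.star a  (after rewriting) ; check direction below
    have hba2' : b * M.star b = a := by rw [hc]; exact hba2
    rw [mul_star M] at hba2'
    exact hba2'.symm
  · -- composition
    intro a b
    apply PFun.ext
    intro x y
    rw [mem_Phi, PFun.comp_apply]
    change _ ↔ y ∈ Part.bind (Phi M b x) (fun z => Phi M a z)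
    rw [Part.mem_bind_iff]
    constructor
    · rintro ⟨hdom, hval⟩
      have h2 : M.star (a * b) * M.star b = M.star (a * b) := by
        apply (M.star_lt (a * b) (M.star b) (M.star_mem b)).mp
        rw [mul_assoc, mul_star M]
      have hbx : M.star b * x = x := by
        conv_lhs => rw [← hdom]
        rw [← mul_assoc, M.comm _ (M.star_mem b) _ (M.star_mem (a * b)), h2, hdom]
      have habx : M.star a * (b * x) = b * x := by
        have h3 := hRR (M.star a) (M.star_mem a) b
        rw [← M.star_congr] at h3
        rw [← mul_assoc, h3, mul_assoc, hdom]
      exact ⟨b * x, (mem_Phi M).mpr ⟨hbx, rfl⟩,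
        (mem_Phi M).mpr ⟨habx, by rw [← mul_assoc]; exact hval⟩⟩
    · rintro ⟨z, hz, hy⟩
      obtain ⟨hbx, hbz⟩ := (mem_Phi M).mp hz
      obtain ⟨haz, hay⟩ := (mem_Phi M).mp hy
      subst hbz
      have e1 : M.star (a * b * x) = M.star x := by
        rw [mul_assoc, M.star_congr a (b * x), haz, M.star_congr b x, hbx]
      have e2 := hRR (M.star (a * b)) (M.star_mem (a * b)) x
      rw [← M.star_congr, e1, mul_star M] at e2
      exact ⟨e2, by rw [mul_assoc]; exact hay⟩
  · -- star is domain
    intro a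
    apply PFun.ext
    intro x y
    rw [mem_Phi, PFun.mem_res, star_of_mem M (M.star_mem a)]
    constructor
    · rintro ⟨h1, h2⟩
      exact ⟨(dom_Phi M).mpr h1, h1.symm.trans h2⟩
    · rintro ⟨h1, h2⟩
      have hd := (dom_Phi M).mp h1
      exact ⟨hd, by rw [hd]; exact h2⟩
  · -- plus is range
    intro a
    obtain ⟨t, ht⟩ := key a
    apply PFun.ext
    intro x y
    rw [mem_Phi, PFun.mem_res, star_of_mem M (M.plus_mem a)]
    constructor
    · rintro ⟨h1, h2⟩
      refine ⟨?_, h1.symm.trans h2⟩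
      rw [mem_ran_iff']
      refine ⟨M.star a * (t * x), (mem_Phi M).mpr ⟨?_, ?_⟩⟩
      · rw [← mul_assoc, M.idem _ (M.star_mem a)]
      · rw [← mul_assoc, mul_star M, ← mul_assoc, ht]
        exact h1
    · rintro ⟨h1, h2⟩
      rw [mem_ran_iff'] at h1
      obtain ⟨z, hz⟩ := h1
      obtain ⟨hz1, hz2⟩ := (mem_Phi M).mp hz
      constructor
      · rw [← hz2, ← mul_assoc, plus_mul M]
      · rw [← hz2, ← mul_assoc, plus_mul M, hz2]
        exact h2
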